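/- Two vertices (v,S) and (w,T) in distinct vertex clouds of the CFI-type graph G_k (or H_k) are at distance 2 if and only if v and w are adjacent in K (i.e., v ≠ w) and the edge e = {v,w} satisfies: e ∈ S ⇔ e ∈ T. -/

import Mathlib

open SimpleGraph
open scoped Classical

noncomputable section

/-- The set of edges of the complete graph `K` on `Fin (k+1)` incident to `v`. -/
def edgesAt (k : ℕ) (v : Fin (k + 1)) : Finset (Sym2 (Fin (k + 1))) :=
  (⊤ : SimpleGraph (Fin (k + 1))).edgeFinset.filter (fun e => v ∈ e)

/-- Carrier for CFI-type graphs over the complete graph on `k+1` vertices: vertex-cloud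
candidates `(v, S)` and edge-cloud vertices `(e, b)` (`b = false` for `e⁰`, `b = true`
for `e¹`). -/
def CFIVert (k : ℕ) : Type :=
  (Fin (k + 1) × Finset (Sym2 (Fin (k + 1)))) ⊕ (Sym2 (Fin (k + 1)) × Bool)

/-- A vertex-cloud candidate `(v, S)` is valid for parity `p` if `S` consists of edges
incident to `v` and `S` has even cardinality exactly when `p v = true`. -/
def ValidCloud (k : ℕ) (p : Fin (k + 1) → Bool) (v : Fin (k + 1))
    (S : Finset (Sym2 (Fin (k + 1)))) : Prop :=
  S ⊆ edgesAt k v ∧ (Even S.card ↔ p v = true)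

/-- The CFI-type graph over the complete graph on `k+1` vertices, with cloud parities
prescribed by `p`: `e⁰` and `e¹` are adjacent for every edge `e` of `K`; a valid cloud
vertex `(v, S)` is adjacent to `e¹` if `v ∈ e` and `e ∈ S`, and to `e⁰` if `v ∈ e` and
`e ∉ S`. -/
def CFIGraph (k : ℕ) (p : Fin (k + 1) → Bool) : SimpleGraph (CFIVert k) :=
  SimpleGraph.fromRel (fun x y =>
    match x, y with
    | .inl (v, S), .inr (e, b) =>
        ValidCloud k p v S ∧ ¬ e.IsDiag ∧ v ∈ e ∧ (b = true ↔ e ∈ S)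
    | .inr (e, b), .inr (e', b') => e = e' ∧ ¬ e.IsDiag ∧ b ≠ b'
    | _, _ => False)

/-- Two valid cloud vertices `(v, S)` and `(w, T)` in distinct vertex
clouds of a CFI-type graph (with arbitrary prescribed cloud parities `p`, covering both
`G_k` and `H_k`) are at distance exactly `2` if and only if `v ≠ w` (so that `v` and `w`
are adjacent in the complete graph `K`) and the edge `e = {v, w}` satisfies
`e ∈ S ↔ e ∈ T`. -/
theorem cfi_cloud_distance_two_iff (k : ℕ) (p : Fin (k + 1) → Bool)
    (v w : Fin (k + 1)) (S T : Finset (Sym2 (Fin (k + 1))))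
    (hS : ValidCloud k p v S) (hT : ValidCloud k p w T) (hvw : v ≠ w) :
    (CFIGraph k p).dist (Sum.inl (v, S)) (Sum.inl (w, T)) = 2 ↔
      (s(v, w) ∈ S ↔ s(v, w) ∈ T) := by
  have hne : (Sum.inl (v, S) : CFIVert k) ≠ Sum.inl (w, T) := by
    intro h
    exact hvw (congrArg (fun x => Prod.fst x) (Sum.inl.inj h))
  constructor
  · intro hdist
    obtain ⟨pw, hpw⟩ := SimpleGraph.exists_walk_of_dist_ne_zero (show (CFIGraph k p).dist (Sum.inl (v, S)) (Sum.inl (w, T)) ≠ 0 by omega)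
    rw [hdist] at hpw
    -- pw is a walk of length 2; extract the midpoint
    match pw, hpw with
    | SimpleGraph.Walk.cons' _ x _ h1 (SimpleGraph.Walk.cons h2 SimpleGraph.Walk.nil), _ =>
      simp only [CFIGraph, SimpleGraph.fromRel_adj] at h1 h2
      match x, h1, h2 with
      | Sum.inl _, ⟨_, h1⟩, _ => simp [CFIGraph] at h1
      | Sum.inr (e, b), ⟨_, h1⟩, ⟨_, h2⟩ =>
        have h1' : ¬ e.IsDiag ∧ v ∈ e ∧ (b = true ↔ e ∈ S) := by
          rcases h1 with h | h
          · exact ⟨h.2.1, h.2.2.1, h.2.2.2⟩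
          · exact absurd h (by simp)
        have h2' : ¬ e.IsDiag ∧ w ∈ e ∧ (b = true ↔ e ∈ T) := by
          rcases h2 with h | h
          · exact absurd h (by simp)
          · exact ⟨h.2.1, h.2.2.1, h.2.2.2⟩
        have he : e = s(v, w) := (Sym2.mem_and_mem_iff hvw).mp ⟨h1'.2.1, h2'.2.1⟩
        rw [he] at h1' h2'
        rw [← h1'.2.2, ← h2'.2.2]
  · intro hST
    -- build a walk of length 2 through the edge vertex (s(v,w), b)
    set e : Sym2 (Fin (k + 1)) := s(v, w) with he
    set b : Bool := decide (e ∈ S) with hb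
    have hbS : b = true ↔ e ∈ S := by simp [hb]
    have hdiag : ¬ e.IsDiag := by simp [he, hvw]
    have h1 : (CFIGraph k p).Adj (Sum.inl (v, S)) (Sum.inr (e, b)) := by
      simp only [CFIGraph, SimpleGraph.fromRel_adj]
      exact ⟨Sum.inl_ne_inr, Or.inl ⟨hS, hdiag, Sym2.mem_mk_left v w, hbS⟩⟩
    have h2 : (CFIGraph k p).Adj (Sum.inr (e, b)) (Sum.inl (w, T)) := by
      simp only [CFIGraph, SimpleGraph.fromRel_adj]
      exact ⟨Sum.inr_ne_inl, Or.inr ⟨hT, hdiag, Sym2.mem_mk_right v w, hbS.trans hST⟩⟩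
    have hle : (CFIGraph k p).dist (Sum.inl (v, S)) (Sum.inl (w, T)) ≤ 2 :=
      SimpleGraph.dist_le (SimpleGraph.Walk.cons h1 (SimpleGraph.Walk.cons h2 SimpleGraph.Walk.nil))
    have hpos : 0 < (CFIGraph k p).dist (Sum.inl (v, S)) (Sum.inl (w, T)) :=
      SimpleGraph.Reachable.pos_dist_of_ne ⟨SimpleGraph.Walk.cons h1
        (SimpleGraph.Walk.cons h2 SimpleGraph.Walk.nil)⟩ hne
    have hnot1 : (CFIGraph k p).dist (Sum.inl (v, S)) (Sum.inl (w, T)) ≠ 1 := by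
      intro hd
      have hadj := SimpleGraph.dist_eq_one_iff_adj.mp hd
      simp only [CFIGraph, SimpleGraph.fromRel_adj] at hadj
      rcases hadj with ⟨-, h | h⟩ <;> exact h
    omega

end
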